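/- In the state-machine model A, composition # is associative up to observational equivalence: for all state machines f, g, h of matching types, run-observations of (f # g) # h and f # (g # h) agree (i.e., they unfold to the same stream of functions). -/

import Mathlib

universe u

/-- State-machine model of hyperfunctions: a hidden state type, a step
function producing either a final value or the next function plus a new
state, and an initial state. -/
structure A (a b : Type u) : Type (u + 1) where
  σ : Type u
  step : σ → b ⊕ ((a → b) × σ)
  init : σ

namespace A

/-- Composition `#` of state machines, pairing the states. -/
def comp {a b c : Type u} (f : A b c) (g : A a b) : A a c where
  σ := f.σ × g.σ
  init := (f.init, g.init)
  step := fun p =>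
    match f.step p.1 with
    | .inl n => .inl n
    | .inr (h, y) =>
      match g.step p.2 with
      | .inl m => .inl (h m)
      | .inr (h', y') => .inr (h ∘ h', (y, y'))

end A

namespace A

/-- The sequence of states reached by a machine (or the final value,
once the machine has stopped). -/
def statesAux {a b : Type u} (m : A a b) : ℕ → b ⊕ m.σ
  | 0 => .inr m.init
  | n + 1 =>
    match statesAux m n with
    | .inl v => .inl v
    | .inr s =>
      match m.step s with
      | .inl v => .inl v
      | .inr (_, s') => .inr s'

/-- The unfolding of a machine into its observable stream: at each time `n`,
either the final value it has stopped with, or the next function it emits. -/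
def obs {a b : Type u} (m : A a b) (n : ℕ) : b ⊕ (a → b) :=
  match statesAux m n with
  | .inl v => .inl v
  | .inr s =>
    match m.step s with
    | .inl v => .inl v
    | .inr (h, _) => .inr h

end A

/-- In the state-machine model, composition is associative up to observational
equivalence: `(f # g) # h` and `f # (g # h)` unfold to the same stream. -/
theorem statesAux_assoc {z a b c : Type u}
    (f : A b c) (g : A a b) (h : A z a) :
    ∀ n, ((f.comp g).comp h).statesAux n
      = Sum.map id (fun p => ((p.1, p.2.1), p.2.2)) ((f.comp (g.comp h)).statesAux n) := by
  intro n
  induction n with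
  | zero => rfl
  | succ n ih =>
    rw [A.statesAux, A.statesAux, ih]
    cases (f.comp (g.comp h)).statesAux n with
    | inl v => rfl
    | inr s =>
      obtain ⟨x, y, w⟩ := s
      erw [Sum.map_inr]
      simp only [A.comp]
      rcases f.step x with v | ⟨h1, x'⟩ <;>
        [skip; rcases g.step y with v | ⟨h2, y'⟩] <;>
        [skip; skip; rcases h.step w with v | ⟨h3, w'⟩] <;> rfl

theorem comp_assoc_obs {z a b c : Type u}
    (f : A b c) (g : A a b) (h : A z a) :
    ∀ n, ((f.comp g).comp h).obs n = (f.comp (g.comp h)).obs n := by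
  intro n
  unfold A.obs
  rw [statesAux_assoc]
  cases (f.comp (g.comp h)).statesAux n with
  | inl v => rfl
  | inr s =>
    obtain ⟨x, y, w⟩ := s
    erw [Sum.map_inr]
    simp only [A.comp]
    rcases f.step x with v | ⟨h1, x'⟩ <;>
      [skip; rcases g.step y with v | ⟨h2, y'⟩] <;>
      [skip; skip; rcases h.step w with v | ⟨h3, w'⟩] <;> rfl
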